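/- For every i ≥ 1 and every labeled graph, the walk labeling κ^{(i)} refines the extended-connectivity labeling ec^{(i)}: if κ^{(i)}(u) = κ^{(i)}(v) then ec^{(i)}(u) = ec^{(i)}(v). -/

import Mathlib

open Finset

/-- A walk represented as a vertex function with consecutive vertices adjacent. -/
def IsWalk {V : Type*} (G : SimpleGraph V) {i : ℕ} (f : Fin (i+1) → V) : Prop :=
  ∀ j : Fin i, G.Adj (f j.castSucc) (f j.succ)

/-- Walks of length `i` in `G`. -/
abbrev WalkLen {V : Type*} (G : SimpleGraph V) (i : ℕ) : Type _ :=
  { f : Fin (i+1) → V // IsWalk G f }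

/-- Walks of length `i` in `G` starting at `v`. -/
abbrev WalkFrom {V : Type*} (G : SimpleGraph V) (v : V) (i : ℕ) : Type _ :=
  { f : Fin (i+1) → V // f 0 = v ∧ IsWalk G f }

noncomputable instance {V : Type*} (G : SimpleGraph V) [Fintype V] (i : ℕ) :
    Fintype (WalkLen G i) := Fintype.ofFinite _

noncomputable instance {V : Type*} (G : SimpleGraph V) [Fintype V] (v : V) (i : ℕ) :
    Fintype (WalkFrom G v i) := Fintype.ofFinite _

/-- Label sequence of a walk. -/
def lseq {V S : Type*} (lab : V → S) {i : ℕ} (f : Fin (i+1) → V) : List S :=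
  List.ofFn (lab ∘ f)

/-- κ^{(i)}(v): multiset of label sequences of walks of length exactly i from v. -/
noncomputable def kappa {V S : Type*} (G : SimpleGraph V) [Fintype V] (lab : V → S)
    (i : ℕ) (v : V) : Multiset (List S) :=
  (Finset.univ : Finset (WalkFrom G v i)).val.map fun w => lseq lab w.1

/-- κ₊^{(ℓ)}(v): multiset of label sequences of walks of length at most ℓ from v. -/
noncomputable def kappaPlus {V S : Type*} (G : SimpleGraph V) [Fintype V] (lab : V → S)
    (ℓ : ℕ) (v : V) : Multiset (List S) :=
  ∑ i ∈ Finset.range (ℓ+1), kappa G lab i v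

/-- The type of Weisfeiler-Leman labels after i iterations. -/
def WLL (S : Type*) : ℕ → Type _
  | 0 => S
  | (i+1) => WLL S i × Multiset (WLL S i)

/-- Weisfeiler-Leman refinement. -/
def wl {V S : Type*} (G : SimpleGraph V) [Fintype V] [DecidableRel G.Adj] (lab : V → S) :
    (i : ℕ) → V → WLL S i
  | 0, v => lab v
  | (i+1), v => (wl G lab i v, (G.neighborFinset v).val.map (wl G lab i))

/-- Morgan's extended connectivity. -/
def ec {V : Type*} (G : SimpleGraph V) [Fintype V] [DecidableRel G.Adj] : ℕ → V → ℕ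
  | 0, _ => 1
  | (i+1), v => ∑ u ∈ G.neighborFinset v, ec G i u

/-- Vertices of the direct product graph: pairs with matching labels. -/
abbrev ProdVert {V W S : Type*} (labG : V → S) (labH : W → S) : Type _ :=
  { p : V × W // labG p.1 = labH p.2 }

/-- The direct product graph of two labeled graphs. -/
def prodGraph {V W S : Type*} (G : SimpleGraph V) (H : SimpleGraph W)
    (labG : V → S) (labH : W → S) : SimpleGraph (ProdVert labG labH) where
  Adj p q := G.Adj p.1.1 q.1.1 ∧ H.Adj p.1.2 q.1.2
  symm := ⟨fun _ _ h => ⟨h.1.symm, h.2.symm⟩⟩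
  loopless := ⟨fun _ h => G.loopless.irrefl _ h.1⟩

open Classical in
/-- k_i(u,v): pairs of length-i walks from u and v with matching label sequences. -/
noncomputable def kwalk {V W S : Type*} (G : SimpleGraph V) (H : SimpleGraph W)
    [Fintype V] [Fintype W] (labG : V → S) (labH : W → S) (i : ℕ) (u : V) (v : W) : ℕ :=
  ∑ w : WalkFrom G u i, ∑ w' : WalkFrom H v i,
    ∏ j : Fin (i+1), if labG (w.1 j) = labH (w'.1 j) then 1 else 0



noncomputable def walkEquiv {V : Type*} (G : SimpleGraph V) [Fintype V] [DecidableRel G.Adj]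
    (v : V) (i : ℕ) :
    WalkFrom G v (i+1) ≃ Σ u : {u // u ∈ G.neighborFinset v}, WalkFrom G u.1 i where
  toFun f := ⟨⟨f.1 (Fin.succ 0), by
      have h0 := f.2.2 0
      rw [show (Fin.castSucc 0) = (0 : Fin (i+2)) from rfl, f.2.1] at h0
      simpa using h0⟩,
    ⟨fun j => f.1 j.succ, rfl, fun j => by
      have := f.2.2 j.succ
      exact this⟩⟩
  invFun x := ⟨Fin.cons v x.2.1, Fin.cons_zero _ _, fun j => by
    refine Fin.cases ?_ ?_ j
    · have h := x.1.2
      rw [SimpleGraph.mem_neighborFinset] at h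
      simpa [x.2.2.1] using h
    · intro k
      have := x.2.2.2 k
      simpa [← Fin.succ_castSucc, Fin.cons_succ] using this⟩
  left_inv f := by
    apply Subtype.ext
    funext j
    refine Fin.cases ?_ ?_ j
    · simp [f.2.1]
    · intro k; simp
  right_inv x := by
    obtain ⟨⟨u, hu⟩, g⟩ := x
    have hu0 : (Fin.cons v g.1 : Fin (i+2) → V) (Fin.succ 0) = u := by
      simpa [Fin.cons_succ] using g.2.1
    refine Sigma.ext (Subtype.ext hu0) ?_
    refine (Subtype.heq_iff_coe_eq ?_).2 ?_
    · intro f; dsimp only; rw [hu0]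
    · funext j; simp [Fin.cons_succ]

lemma ec_eq_card_walks {V : Type*} (G : SimpleGraph V) [Fintype V] [DecidableRel G.Adj] :
    ∀ (i : ℕ) (v : V), ec G i v = Fintype.card (WalkFrom G v i)
  | 0, v => by
      rw [ec]
      refine (Fintype.card_eq_one_iff.2 ⟨⟨fun _ => v, rfl, fun j => j.elim0⟩, ?_⟩).symm
      rintro ⟨f, hf0, -⟩
      apply Subtype.ext
      funext j
      have hj : j = 0 := Fin.fin_one_eq_zero j
      rw [hj]
      exact hf0
  | (i+1), v => by
      rw [ec, Fintype.card_congr (walkEquiv G v i), Fintype.card_sigma]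
      rw [← Finset.sum_attach (G.neighborFinset v) (fun u => ec G i u)]
      exact Finset.sum_congr rfl fun u _ => ec_eq_card_walks G i u.1

lemma card_kappa {V S : Type*} (G : SimpleGraph V) [Fintype V] (lab : V → S) (i : ℕ) (v : V) :
    Multiset.card (kappa G lab i v) = Fintype.card (WalkFrom G v i) := by
  rw [kappa, Multiset.card_map]
  exact Finset.card_univ

/-- κ^{(i)} refines ec^{(i)} for i ≥ 1. -/
theorem stmt_4 {V S : Type*} [Fintype V] (G : SimpleGraph V) [DecidableRel G.Adj]
    (lab : V → S) (i : ℕ) (hi : 1 ≤ i) (u v : V)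
    (h : kappa G lab i u = kappa G lab i v) :
    ec G i u = ec G i v := by
  have hc := congrArg Multiset.card h
  rw [card_kappa, card_kappa] at hc
  classical
  rw [ec_eq_card_walks G i u, ec_eq_card_walks G i v]
  exact hc
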